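/- Let A, B, K, Q, R, P, N, and the cost J(z; v) be as follows: A is a real n×n matrix, B a real n×m matrix, K a real m×n matrix; Q, R, P are real symmetric positive semidefinite matrices satisfying P = (A + BK)ᵀ P (A + BK) + Q + Kᵀ R K; N ≥ 1; and J(z; v) = Σ_{j=0}^{N−1} [ (x̄(j) − x_a)ᵀ Q (x̄(j) − x_a) + (v(j) − u_a)ᵀ R (v(j) − u_a) ] + (x̄(N) − x_a)ᵀ P (x̄(N) − x_a) along x̄(0) = z, x̄(j+1) = A x̄(j) + B v(j). Let Z ⊆ ℝ^n × ℝ^m and let Ω ⊆ ℝ^n × ℝ^n × ℝ^m satisfy: for every (x, x_a, u_a) ∈ Ω, (x, K(x − x_a) + u_a) ∈ Z, A x_a + B u_a = x_a, and (A x + B(K(x − x_a) + u_a), x_a, u_a) ∈ Ω. Let S ≥ 0, let V_of : ℝ^n × ℝ^m → [0, ∞) and let V_av assign to each decision tuple (z, v, x_a, u_a) a value in [0, S]. Call (v, x_a, u_a) feasible for z if the states x̄(j) from z under v satisfy (x̄(j), v(j)) ∈ Z for j ∈ {0, …, N−1} and (x̄(N), x_a, u_a) ∈ Ω, and define the total cost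 V_N(z; v, x_a, u_a) = J(z; v) (with artificial pair (x_a, u_a)) + V_of(x_a, u_a) + V_av(z, v, x_a, u_a), and the value function V*(z) as the infimum of V_N(z; v, x_a, u_a) over feasible tuples. Suppose for a state x the infimum is attained at a feasible tuple (u°, x_a°, u_a°), and let x⁺ = A x + B u°(0). Then V*(x⁺) ≤ V*(x) − (x − x_a°)ᵀ Q (x − x_a°) − (u°(0) − u_a°)ᵀ R (u°(0) − u_a°) + S. -/

import Mathlib

open Matrix

/-- The quadratic form `v ↦ vᵀ M v`. -/
noncomputable def quad {n : ℕ} (M : Matrix (Fin n) (Fin n) ℝ) (v : Fin n → ℝ) : ℝ :=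
  v ⬝ᵥ M.mulVec v

/-- State trajectory of `x(j+1) = A x(j) + B v(j)` from `z` under controls `v`. -/
noncomputable def traj {n m : ℕ} (A : Matrix (Fin n) (Fin n) ℝ)
    (B : Matrix (Fin n) (Fin m) ℝ) (z : Fin n → ℝ) (v : ℕ → Fin m → ℝ) : ℕ → Fin n → ℝ
  | 0 => z
  | j + 1 => A.mulVec (traj A B z v j) + B.mulVec (v j)

/-- Finite-horizon tracking cost `J(z; v)` with artificial pair `(xa, ua)`. -/
noncomputable def Jcost {n m : ℕ} (A : Matrix (Fin n) (Fin n) ℝ)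
    (B : Matrix (Fin n) (Fin m) ℝ) (Q P : Matrix (Fin n) (Fin n) ℝ)
    (R : Matrix (Fin m) (Fin m) ℝ) (N : ℕ)
    (z : Fin n → ℝ) (v : ℕ → Fin m → ℝ) (xa : Fin n → ℝ) (ua : Fin m → ℝ) : ℝ :=
  (∑ j ∈ Finset.range N, (quad Q (traj A B z v j - xa) + quad R (v j - ua)))
    + quad P (traj A B z v N - xa)

/-- Feasibility of a decision tuple `(v, xa, ua)` for the state `z`. -/
def FeasibleTuple {n m : ℕ} (A : Matrix (Fin n) (Fin n) ℝ)
    (B : Matrix (Fin n) (Fin m) ℝ) (Z : Set ((Fin n → ℝ) × (Fin m → ℝ)))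
    (Ω : Set ((Fin n → ℝ) × (Fin n → ℝ) × (Fin m → ℝ))) (N : ℕ)
    (z : Fin n → ℝ) (v : ℕ → Fin m → ℝ) (xa : Fin n → ℝ) (ua : Fin m → ℝ) : Prop :=
  (∀ j < N, (traj A B z v j, v j) ∈ Z) ∧ (traj A B z v N, xa, ua) ∈ Ω

/-- Total cost: dynamic cost plus offset cost plus avoidance cost. -/
noncomputable def VNtot {n m : ℕ} (A : Matrix (Fin n) (Fin n) ℝ)
    (B : Matrix (Fin n) (Fin m) ℝ) (Q P : Matrix (Fin n) (Fin n) ℝ)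
    (R : Matrix (Fin m) (Fin m) ℝ) (N : ℕ)
    (Vof : (Fin n → ℝ) × (Fin m → ℝ) → ℝ)
    (Vav : (Fin n → ℝ) → (ℕ → Fin m → ℝ) → (Fin n → ℝ) → (Fin m → ℝ) → ℝ)
    (z : Fin n → ℝ) (v : ℕ → Fin m → ℝ) (xa : Fin n → ℝ) (ua : Fin m → ℝ) : ℝ :=
  Jcost A B Q P R N z v xa ua + Vof (xa, ua) + Vav z v xa ua

/-- Value function: infimum of the total cost over feasible decision tuples. -/
noncomputable def Vstar {n m : ℕ} (A : Matrix (Fin n) (Fin n) ℝ)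
    (B : Matrix (Fin n) (Fin m) ℝ) (Q P : Matrix (Fin n) (Fin n) ℝ)
    (R : Matrix (Fin m) (Fin m) ℝ) (Z : Set ((Fin n → ℝ) × (Fin m → ℝ)))
    (Ω : Set ((Fin n → ℝ) × (Fin n → ℝ) × (Fin m → ℝ))) (N : ℕ)
    (Vof : (Fin n → ℝ) × (Fin m → ℝ) → ℝ)
    (Vav : (Fin n → ℝ) → (ℕ → Fin m → ℝ) → (Fin n → ℝ) → (Fin m → ℝ) → ℝ)
    (z : Fin n → ℝ) : ℝ :=
  sInf {c : ℝ | ∃ (v : ℕ → Fin m → ℝ) (xa : Fin n → ℝ) (ua : Fin m → ℝ),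
    FeasibleTuple A B Z Ω N z v xa ua ∧ VNtot A B Q P R N Vof Vav z v xa ua = c}

lemma quad_nonneg {n : ℕ} {M : Matrix (Fin n) (Fin n) ℝ} (hM : M.PosSemidef)
    (v : Fin n → ℝ) : 0 ≤ quad M v := by
  have := hM.dotProduct_mulVec_nonneg v
  simpa [quad, dotProduct] using this

lemma quad_conj {k n : ℕ} (P : Matrix (Fin k) (Fin k) ℝ) (M : Matrix (Fin k) (Fin n) ℝ)
    (e : Fin n → ℝ) : quad (Mᵀ * P * M) e = quad P (M.mulVec e) := by
  simp only [quad, ← Matrix.mulVec_mulVec, Matrix.dotProduct_mulVec,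
    Matrix.vecMul_transpose]

lemma quad_add {n : ℕ} (M Nn : Matrix (Fin n) (Fin n) ℝ) (v : Fin n → ℝ) :
    quad (M + Nn) v = quad M v + quad Nn v := by
  simp [quad, Matrix.add_mulVec, dotProduct_add]

lemma Jcost_nonneg {n m : ℕ} (A : Matrix (Fin n) (Fin n) ℝ)
    (B : Matrix (Fin n) (Fin m) ℝ) {Q P : Matrix (Fin n) (Fin n) ℝ}
    {R : Matrix (Fin m) (Fin m) ℝ} (hQ : Q.PosSemidef) (hR : R.PosSemidef)
    (hP : P.PosSemidef) (N : ℕ) (z : Fin n → ℝ) (v : ℕ → Fin m → ℝ)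
    (xa : Fin n → ℝ) (ua : Fin m → ℝ) : 0 ≤ Jcost A B Q P R N z v xa ua := by
  unfold Jcost
  have h1 : 0 ≤ ∑ j ∈ Finset.range N,
      (quad Q (traj A B z v j - xa) + quad R (v j - ua)) :=
    Finset.sum_nonneg fun j _ => add_nonneg (quad_nonneg hQ _) (quad_nonneg hR _)
  exact add_nonneg h1 (quad_nonneg hP _)

/-- Lemma 6 (decreasing property): the optimal value function of the set-point
tracking MPC with an avoidance cost bounded between `0` and `S` decreases by at
least the first optimal stage cost, up to the disturbance `S`. -/
theorem value_function_decrease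
    (n m N : ℕ) (hN : 1 ≤ N)
    (A : Matrix (Fin n) (Fin n) ℝ) (B : Matrix (Fin n) (Fin m) ℝ)
    (K : Matrix (Fin m) (Fin n) ℝ)
    (Q P : Matrix (Fin n) (Fin n) ℝ) (R : Matrix (Fin m) (Fin m) ℝ)
    (hQ : Q.PosSemidef) (hR : R.PosSemidef) (hP : P.PosSemidef)
    (hLyap : P = (A + B * K)ᵀ * P * (A + B * K) + Q + Kᵀ * R * K)
    (Z : Set ((Fin n → ℝ) × (Fin m → ℝ)))
    (Ω : Set ((Fin n → ℝ) × (Fin n → ℝ) × (Fin m → ℝ)))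
    (hΩ : ∀ p ∈ Ω,
      (p.1, K.mulVec (p.1 - p.2.1) + p.2.2) ∈ Z ∧
      A.mulVec p.2.1 + B.mulVec p.2.2 = p.2.1 ∧
      (A.mulVec p.1 + B.mulVec (K.mulVec (p.1 - p.2.1) + p.2.2), p.2.1, p.2.2) ∈ Ω)
    (S : ℝ) (hS : 0 ≤ S)
    (Vof : (Fin n → ℝ) × (Fin m → ℝ) → ℝ) (hVof : ∀ q, 0 ≤ Vof q)
    (Vav : (Fin n → ℝ) → (ℕ → Fin m → ℝ) → (Fin n → ℝ) → (Fin m → ℝ) → ℝ)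
    (hVav : ∀ z v xa ua, 0 ≤ Vav z v xa ua ∧ Vav z v xa ua ≤ S)
    (x : Fin n → ℝ) (uo : ℕ → Fin m → ℝ) (xao : Fin n → ℝ) (uao : Fin m → ℝ)
    (hfeas : FeasibleTuple A B Z Ω N x uo xao uao)
    (hopt : Vstar A B Q P R Z Ω N Vof Vav x = VNtot A B Q P R N Vof Vav x uo xao uao) :
    Vstar A B Q P R Z Ω N Vof Vav (A.mulVec x + B.mulVec (uo 0))
      ≤ Vstar A B Q P R Z Ω N Vof Vav x
        - quad Q (x - xao) - quad R (uo 0 - uao) + S := by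
  obtain ⟨N', rfl⟩ : ∃ N', N = N' + 1 := ⟨N - 1, by omega⟩
  set N := N' + 1 with hNdef
  set xN := traj A B x uo N with hxN
  set e := xN - xao with he
  obtain ⟨hZ_term, hst, hΩ'⟩ := hΩ _ hfeas.2
  simp only at hZ_term hst hΩ'
  -- candidate control sequence
  set v' : ℕ → Fin m → ℝ := fun j => if j < N' then uo (j + 1) else K.mulVec e + uao
    with hv'
  set xp := A.mulVec x + B.mulVec (uo 0) with hxp
  -- shifted trajectory
  have htraj : ∀ j ≤ N', traj A B xp v' j = traj A B x uo (j + 1) := by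
    intro j hj
    induction j with
    | zero => simp [traj, hxp]
    | succ k ih =>
      have hk : k ≤ N' := Nat.le_of_succ_le hj
      have hk' : k < N' := hj
      show A.mulVec (traj A B xp v' k) + B.mulVec (v' k) = _
      rw [ih hk]
      simp [traj, hv', hk']
  have htrajN' : traj A B xp v' N' = xN := by rw [htraj N' le_rfl]
  have htrajN : traj A B xp v' N = A.mulVec xN + B.mulVec (K.mulVec e + uao) := by
    show traj A B xp v' (N' + 1) = _
    show A.mulVec (traj A B xp v' N') + B.mulVec (v' N') = _
    rw [htrajN']
    simp [hv']
  -- terminal deviation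
  have hterm : traj A B xp v' N - xao = (A + B * K).mulVec e := by
    rw [htrajN]
    have : (A + B * K).mulVec e = A.mulVec e + B.mulVec (K.mulVec e) := by
      rw [Matrix.add_mulVec, ← Matrix.mulVec_mulVec]
    rw [this]
    have hAe : A.mulVec e = A.mulVec xN - A.mulVec xao := by
      rw [he, Matrix.mulVec_sub]
    rw [hAe, Matrix.mulVec_add]
    have h2 : A.mulVec xao = xao - B.mulVec uao := eq_sub_iff_add_eq.mpr hst
    rw [h2]; abel
  -- feasibility of the candidate
  have hfeas' : FeasibleTuple A B Z Ω N xp v' xao uao := by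
    constructor
    · intro j hj
      rcases lt_or_ge j N' with h | h
      · rw [htraj j (le_of_lt h)]
        have : v' j = uo (j + 1) := by simp [hv', h]
        rw [this]
        exact hfeas.1 (j + 1) (by omega)
      · have hjN : j = N' := by omega
        have hv : v' j = K.mulVec e + uao := by
          rw [hv']; simp [hjN]
        rw [hjN, htrajN', ← hjN, hv]
        exact hZ_term
    · rw [htrajN]
      exact hΩ'
  -- cost of the candidate
  have hstage : quad P e = quad P ((A + B * K).mulVec e) + quad Q e
      + quad R (K.mulVec e) := by
    conv_lhs => rw [hLyap]
    rw [quad_add, quad_add, quad_conj, quad_conj]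
  have hJ : Jcost A B Q P R N xp v' xao uao
      = Jcost A B Q P R N x uo xao uao - quad Q (x - xao) - quad R (uo 0 - uao) := by
    unfold Jcost
    rw [hterm]
    have hsum : ∑ j ∈ Finset.range N,
        (quad Q (traj A B xp v' j - xao) + quad R (v' j - uao))
        = (∑ j ∈ Finset.range N',
            (quad Q (traj A B x uo (j + 1) - xao) + quad R (uo (j + 1) - uao)))
          + (quad Q e + quad R (K.mulVec e)) := by
      rw [Finset.sum_range_succ]
      congr 1
      · apply Finset.sum_congr rfl
        intro j hj
        have hj' : j < N' := Finset.mem_range.mp hj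
        rw [htraj j (le_of_lt hj')]
        have : v' j = uo (j + 1) := by simp [hv', hj']
        rw [this]
      · rw [htrajN']
        have : v' N' = K.mulVec e + uao := by simp [hv']
        rw [this]
        simp [he]
    rw [hsum]
    have hsum2 : ∑ j ∈ Finset.range N,
        (quad Q (traj A B x uo j - xao) + quad R (uo j - uao))
        = (quad Q (x - xao) + quad R (uo 0 - uao))
          + ∑ j ∈ Finset.range N',
            (quad Q (traj A B x uo (j + 1) - xao) + quad R (uo (j + 1) - uao)) := by
      rw [Finset.sum_range_succ']
      simp [traj]
      ring
    rw [hsum2]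
    have := hstage
    linarith [hstage]
  -- final chain of inequalities
  have hmem : VNtot A B Q P R N Vof Vav xp v' xao uao
      ∈ {c : ℝ | ∃ (v : ℕ → Fin m → ℝ) (xa : Fin n → ℝ) (ua : Fin m → ℝ),
        FeasibleTuple A B Z Ω N xp v xa ua ∧ VNtot A B Q P R N Vof Vav xp v xa ua = c} :=
    ⟨v', xao, uao, hfeas', rfl⟩
  have hbdd : BddBelow {c : ℝ | ∃ (v : ℕ → Fin m → ℝ) (xa : Fin n → ℝ) (ua : Fin m → ℝ),
      FeasibleTuple A B Z Ω N xp v xa ua ∧ VNtot A B Q P R N Vof Vav xp v xa ua = c} := by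
    refine ⟨0, fun c hc => ?_⟩
    obtain ⟨v, xa, ua, _, rfl⟩ := hc
    unfold VNtot
    have := Jcost_nonneg A B hQ hR hP N xp v xa ua
    have h1 := hVof (xa, ua)
    have h2 := (hVav xp v xa ua).1
    linarith
  have hle : Vstar A B Q P R Z Ω N Vof Vav xp
      ≤ VNtot A B Q P R N Vof Vav xp v' xao uao := csInf_le hbdd hmem
  have hVN : VNtot A B Q P R N Vof Vav xp v' xao uao
      ≤ VNtot A B Q P R N Vof Vav x uo xao uao
        - quad Q (x - xao) - quad R (uo 0 - uao) + S := by
    unfold VNtot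
    rw [hJ]
    have h1 := (hVav xp v' xao uao).2
    have h2 := (hVav x uo xao uao).1
    linarith
  rw [hopt]
  linarith
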